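/- (Identity of value functions, used in the proof of Theorem 5.10.) Assume the pair (A, b) is controllable (span{b, Ab, …, A^{n−1}b} = ℝⁿ) and A is invertible. Then V₀(ξ) = V₁(ξ) for every ξ ∈ R(T), where V₀(ξ) = inf{‖u‖₀ : u ∈ U(ξ)} and V₁(ξ) = inf{‖u‖₁ : u ∈ U(ξ)}. -/

import Mathlib

set_option maxHeartbeats 1000000


open MeasureTheory

noncomputable section

/-- A control: a measurable function with `|u t| ≤ 1` a.e. on `[0, T]`. -/
def IsControl (T : ℝ) (u : ℝ → ℝ) : Prop :=
  Measurable u ∧ ∀ᵐ t ∂(volume.restrict (Set.Icc (0:ℝ) T)), |u t| ≤ 1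

/-- `∫₀ᵀ e^{−As} b u(s) ds`, the endpoint map of the system `dx/dt = Ax + bu`. -/
def steer (n : ℕ) (A : Matrix (Fin n) (Fin n) ℝ) (b : Fin n → ℝ) (T : ℝ) (u : ℝ → ℝ) :
    Fin n → ℝ :=
  ∫ s in Set.Icc (0:ℝ) T, u s • (NormedSpace.exp (-(s • A))).mulVec b

/-- `L¹` norm of a control on `[0, T]`. -/
def L1norm (T : ℝ) (u : ℝ → ℝ) : ℝ := ∫ t in Set.Icc (0:ℝ) T, |u t|

/-- The support of `u`: closure of `{t ∈ [0,T] : u t ≠ 0}`. -/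
def sparseSupp (T : ℝ) (u : ℝ → ℝ) : Set ℝ :=
  closure {t ∈ Set.Icc (0:ℝ) T | u t ≠ 0}

/-- `L⁰` "norm": Lebesgue measure of the support. -/
def L0norm (T : ℝ) (u : ℝ → ℝ) : ℝ := (volume (sparseSupp T u)).toReal

/-- Admissible controls for initial state `ξ`: controls steering `ξ` to `0` at time `T`. -/
def Adm (n : ℕ) (A : Matrix (Fin n) (Fin n) ℝ) (b : Fin n → ℝ) (T : ℝ) (ξ : Fin n → ℝ) :
    Set (ℝ → ℝ) :=
  {u | IsControl T u ∧ ξ = -(steer n A b T u)}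

/-- The reachable set `R(T)`. -/
def ReachSet (n : ℕ) (A : Matrix (Fin n) (Fin n) ℝ) (b : Fin n → ℝ) (T : ℝ) :
    Set (Fin n → ℝ) :=
  {x | ∃ u, IsControl T u ∧ x = steer n A b T u}

/-- The set `R_α`. -/
def Rset (n : ℕ) (A : Matrix (Fin n) (Fin n) ℝ) (b : Fin n → ℝ) (T α : ℝ) :
    Set (Fin n → ℝ) :=
  {x | ∃ u, IsControl T u ∧ L1norm T u ≤ α ∧ x = steer n A b T u}

/-- Value function of the `L¹`-optimal control problem. -/
def V1 (n : ℕ) (A : Matrix (Fin n) (Fin n) ℝ) (b : Fin n → ℝ) (T : ℝ) (ξ : Fin n → ℝ) : ℝ :=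
  sInf (L1norm T '' Adm n A b T ξ)

/-- Value function of the sparse (`L⁰`) optimal control problem. -/
def V0 (n : ℕ) (A : Matrix (Fin n) (Fin n) ℝ) (b : Fin n → ℝ) (T : ℝ) (ξ : Fin n → ℝ) : ℝ :=
  sInf (L0norm T '' Adm n A b T ξ)

/-- Controllability of the pair `(A, b)`: `span {b, Ab, …, A^{n−1} b} = ℝⁿ`. -/
def Controllable (n : ℕ) (A : Matrix (Fin n) (Fin n) ℝ) (b : Fin n → ℝ) : Prop :=
  Submodule.span ℝ (Set.range fun i : Fin n => (A ^ (i : ℕ)).mulVec b) = ⊤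


namespace SparseAux

/-! ### Real.sign helpers -/

theorem sign_mul_self (r : ℝ) : Real.sign r * r = |r| := by
  rcases lt_trichotomy r 0 with h | h | h
  · rw [Real.sign_of_neg h, abs_of_neg h]; ring
  · simp [h]
  · rw [Real.sign_of_pos h, abs_of_pos h]; ring

theorem abs_mul_sign (r : ℝ) : |r| * Real.sign r = r := by
  rcases lt_trichotomy r 0 with h | h | h
  · rw [Real.sign_of_neg h, abs_of_neg h]; ring
  · simp [h]
  · rw [Real.sign_of_pos h, abs_of_pos h]; ring

theorem abs_sign_le (r : ℝ) : |Real.sign r| ≤ 1 := by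
  rcases Real.sign_apply_eq r with h | h | h <;> rw [h] <;> norm_num

theorem measurable_sign_comp {f : ℝ → ℝ} (hf : Measurable f) :
    Measurable fun s => Real.sign (f s) := by
  have : (fun s => Real.sign (f s)) =
      fun s => if f s < 0 then (-1 : ℝ) else if 0 < f s then 1 else 0 := by
    funext s; rw [Real.sign]
  rw [this]
  exact Measurable.ite (measurableSet_lt hf measurable_const) measurable_const
    (Measurable.ite (measurableSet_lt measurable_const hf) measurable_const measurable_const)

/-! ### The kernel function -/

variable {n : ℕ} (A : Matrix (Fin n) (Fin n) ℝ) (b : Fin n → ℝ)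

/-- The kernel `s ↦ e^{-sA} b`. -/
def g (s : ℝ) : Fin n → ℝ := (NormedSpace.exp (-(s • A))).mulVec b

/-- `M ↦ M.mulVec b` as a linear map. -/
def mulVecRight : Matrix (Fin n) (Fin n) ℝ →ₗ[ℝ] (Fin n → ℝ) where
  toFun M := M.mulVec b
  map_add' M N := Matrix.add_mulVec M N b
  map_smul' c M := Matrix.smul_mulVec c M b

theorem g_continuous : Continuous (g A b) := by
  letI : SeminormedRing (Matrix (Fin n) (Fin n) ℝ) := Matrix.linftyOpSemiNormedRing
  letI : NormedRing (Matrix (Fin n) (Fin n) ℝ) := Matrix.linftyOpNormedRing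
  letI : NormedAlgebra ℝ (Matrix (Fin n) (Fin n) ℝ) := Matrix.linftyOpNormedAlgebra
  have h1 : Continuous fun s : ℝ => -(s • A) := (continuous_id.smul continuous_const).neg
  have h2 : Continuous (NormedSpace.exp : Matrix (Fin n) (Fin n) ℝ → _) :=
    continuous_iff_continuousAt.2 fun x => (NormedSpace.exp_analytic (𝕂 := ℝ) x).continuousAt
  have h3 : Continuous ((mulVecRight b : Matrix (Fin n) (Fin n) ℝ →ₗ[ℝ] (Fin n → ℝ)) :
      Matrix (Fin n) (Fin n) ℝ →ₗ[ℝ] (Fin n → ℝ)) :=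
    LinearMap.continuous_of_finiteDimensional _
  exact h3.comp (h2.comp h1)

theorem g_analytic (φ : (Fin n → ℝ) →ₗ[ℝ] ℝ) :
    AnalyticOnNhd ℝ (fun s => φ (g A b s)) Set.univ := by
  letI : SeminormedRing (Matrix (Fin n) (Fin n) ℝ) := Matrix.linftyOpSemiNormedRing
  letI : NormedRing (Matrix (Fin n) (Fin n) ℝ) := Matrix.linftyOpNormedRing
  letI : NormedAlgebra ℝ (Matrix (Fin n) (Fin n) ℝ) := Matrix.linftyOpNormedAlgebra
  intro s _
  have h1 : AnalyticAt ℝ (fun s : ℝ => -(s • A)) s := by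
    have : (fun s : ℝ => -(s • A)) = fun s : ℝ => s • (-A) := by
      funext s; rw [smul_neg]
    rw [this]
    exact ((1 : ℝ →L[ℝ] ℝ).smulRight (-A)).analyticAt s
  have h2 : AnalyticAt ℝ (NormedSpace.exp : Matrix (Fin n) (Fin n) ℝ → _) (-(s • A)) :=
    NormedSpace.exp_analytic _
  have h4 : AnalyticAt ℝ ((NormedSpace.exp) ∘ fun s : ℝ => -(s • A)) s := AnalyticAt.comp (f := fun s : ℝ => -(s • A)) h2 h1
  have h3 : AnalyticAt ℝ
      (LinearMap.toContinuousLinearMap (φ.comp (mulVecRight b)))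
      (NormedSpace.exp (-(s • A))) :=
    (LinearMap.toContinuousLinearMap (φ.comp (mulVecRight b))).analyticAt _
  exact (AnalyticAt.comp (f := (NormedSpace.exp) ∘ fun s : ℝ => -(s • A)) h3 h4 :)

theorem phi_pow_eq_zero (φ : (Fin n → ℝ) →ₗ[ℝ] ℝ) (hf : ∀ s : ℝ, φ (g A b s) = 0) (k : ℕ) :
    φ ((A ^ k).mulVec b) = 0 := by
  letI : SeminormedRing (Matrix (Fin n) (Fin n) ℝ) := Matrix.linftyOpSemiNormedRing
  letI : NormedRing (Matrix (Fin n) (Fin n) ℝ) := Matrix.linftyOpNormedRing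
  letI : NormedAlgebra ℝ (Matrix (Fin n) (Fin n) ℝ) := Matrix.linftyOpNormedAlgebra
  set X : Matrix (Fin n) (Fin n) ℝ := -A with hX
  have key : ∀ k : ℕ, ∀ s : ℝ, φ ((NormedSpace.exp (s • X) * X ^ k).mulVec b) = 0 := by
    intro k
    induction k with
    | zero =>
      intro s
      have : s • X = -(s • A) := by rw [hX, smul_neg]
      rw [pow_zero, mul_one, this]; exact hf s
    | succ k ih =>
      intro s
      -- the function `h` below is identically zero, so its derivative vanishes
      set L : Matrix (Fin n) (Fin n) ℝ →ₗ[ℝ] ℝ :=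
        φ.comp ((mulVecRight b).comp (LinearMap.mulRight ℝ (X ^ k))) with hL
      have hLapp : ∀ M : Matrix (Fin n) (Fin n) ℝ, L M = φ ((M * X ^ k).mulVec b) := by
        intro M; rfl
      have hd : ∀ s : ℝ, HasDerivAt (fun t : ℝ => L (NormedSpace.exp (t • X)))
          (L (NormedSpace.exp (s • X) * X)) s := by
        intro s
        have h1 : HasDerivAt (fun t : ℝ => NormedSpace.exp (t • X))
            (NormedSpace.exp (s • X) * X) s := hasDerivAt_exp_smul_const X s
        have h2 := (LinearMap.toContinuousLinearMap L).hasFDerivAt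
          (x := NormedSpace.exp (s • X))
        exact (h2.comp_hasDerivAt s h1 :)
      have hzero : (fun t : ℝ => L (NormedSpace.exp (t • X))) = fun _ => (0 : ℝ) := by
        funext t; rw [hLapp]; exact ih t
      have hd0 : HasDerivAt (fun t : ℝ => L (NormedSpace.exp (t • X))) 0 s := by
        rw [hzero]; exact hasDerivAt_const s 0
      have := (hd s).unique hd0
      rw [hLapp] at this
      rw [mul_assoc, ← pow_succ'] at this
      exact this
  have h0 := key k 0
  rw [zero_smul, NormedSpace.exp_zero, one_mul] at h0
  -- `X ^ k = (-1)^k • A ^ k`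
  have hXk : X ^ k = ((-1 : ℝ) ^ k) • A ^ k := by
    rw [hX]
    have : -A = (-1 : ℝ) • A := by rw [neg_smul, one_smul]
    rw [this, smul_pow]
  rw [hXk, Matrix.smul_mulVec, _root_.map_smul, smul_eq_mul] at h0
  rcases mul_eq_zero.1 h0 with h | h
  · exact absurd h (by positivity)
  · exact h

/-- A bound for `g` on a compact interval. -/
theorem g_bound (T : ℝ) : ∃ M : ℝ, 0 ≤ M ∧ ∀ s ∈ Set.Icc (0:ℝ) T, ‖g A b s‖ ≤ M := by
  obtain ⟨M, hM⟩ := isCompact_Icc.exists_bound_of_continuousOn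
    ((g_continuous A b).continuousOn (s := Set.Icc 0 T))
  refine ⟨max M 0, le_max_right _ _, fun s hs => (hM s hs).trans (le_max_left _ _)⟩

/-- A convex symmetric set containing `0` that spans `ℝⁿ` contains a ball around the origin. -/
theorem ball_subset_of_convex (C : Set (Fin n → ℝ)) (h0 : (0 : Fin n → ℝ) ∈ C)
    (hsym : ∀ x ∈ C, -x ∈ C) (hconv : Convex ℝ C)
    (hspan : Submodule.span ℝ C = ⊤) :
    ∃ r : ℝ, 0 < r ∧ ∀ x : Fin n → ℝ, ‖x‖ ≤ r → x ∈ C := by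
  obtain ⟨s, hsC, hspan', hli⟩ := exists_linearIndependent ℝ C
  rw [hspan] at hspan'
  haveI : Fintype s := (hli.setFinite).fintype
  let B : Module.Basis s ℝ (Fin n → ℝ) := Module.Basis.mk hli (by rw [Subtype.range_coe, hspan'])
  set K : ℝ := ∑ i : s, ‖LinearMap.toContinuousLinearMap (B.coord i)‖ with hK
  have hK0 : 0 ≤ K := Finset.sum_nonneg fun i _ => norm_nonneg _
  refine ⟨1 / (K + 1), by positivity, fun x hx => ?_⟩
  set c : s → ℝ := fun i => B.repr x i with hc
  have hsum : ∑ i : s, |c i| ≤ 1 := by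
    have h1 : ∀ i : s, |c i| ≤ ‖LinearMap.toContinuousLinearMap (B.coord i)‖ * ‖x‖ := by
      intro i
      have := (LinearMap.toContinuousLinearMap (B.coord i)).le_opNorm x
      simpa [Real.norm_eq_abs, hc, Module.Basis.coord_apply] using this
    calc ∑ i : s, |c i| ≤ ∑ i : s, ‖LinearMap.toContinuousLinearMap (B.coord i)‖ * ‖x‖ :=
          Finset.sum_le_sum fun i _ => h1 i
      _ = K * ‖x‖ := by rw [hK, Finset.sum_mul]
      _ ≤ K * (1 / (K + 1)) := by
          apply mul_le_mul_of_nonneg_left _ hK0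
          exact hx
      _ ≤ 1 := by
          rw [div_eq_mul_inv, one_mul]
          rw [mul_inv_le_iff₀ (by positivity)]
          linarith
  -- convex combination representation
  have hxsum : x = ∑ i : s, c i • (i : Fin n → ℝ) := by
    have := B.sum_repr x
    rw [← this]
    congr 1
    funext i
    rw [Module.Basis.mk_apply]
  set w : Option s → ℝ := fun o => Option.elim o (1 - ∑ i : s, |c i|) (fun i => |c i|) with hw
  set z : Option s → (Fin n → ℝ) :=
    fun o => Option.elim o 0 (fun i => Real.sign (c i) • (i : Fin n → ℝ)) with hz
  have hmem : ∑ o : Option s, w o • z o ∈ C := by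
    apply hconv.sum_mem
    · intro o _
      cases o with
      | none => simpa [hw] using hsum
      | some i => simp [hw, abs_nonneg]
    · rw [Fintype.sum_option]
      simp [hw]
    · intro o _
      cases o with
      | none => simpa [hz] using h0
      | some i =>
        simp only [hz, Option.elim]
        rcases Real.sign_apply_eq (c i) with h | h | h <;> rw [h]
        · simpa using hsym _ (hsC i.2)
        · simpa using h0
        · simpa using hsC i.2
  have : ∑ o : Option s, w o • z o = x := by
    rw [Fintype.sum_option]
    simp only [hw, hz, Option.elim]
    rw [smul_zero, zero_add]
    rw [hxsum]
    congr 1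
    funext i
    rw [smul_smul, abs_mul_sign]
  rwa [this] at hmem

/-- Integrability of `w • g` on subsets of `[0,T]` for a.e.-bounded measurable `w`. -/
theorem integrableOn_smul_g {T : ℝ} {S : Set ℝ} (hS : MeasurableSet S)
    (hsub : S ⊆ Set.Icc (0:ℝ) T) {w : ℝ → ℝ} (hw : Measurable w) {Cb : ℝ}
    (hbound : ∀ᵐ t ∂(volume.restrict S), |w t| ≤ Cb) :
    IntegrableOn (fun s => w s • g A b s) S := by
  obtain ⟨M, hM0, hM⟩ := g_bound A b T
  have hfin : volume S < ⊤ :=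
    lt_of_le_of_lt (measure_mono hsub) (by rw [Real.volume_Icc]; exact ENNReal.ofReal_lt_top)
  have hconst : IntegrableOn (fun _ : ℝ => Cb * M) S := by
    exact integrableOn_const hfin.ne
  apply Integrable.mono' hconst
  · exact (hw.aestronglyMeasurable.smul
      ((g_continuous A b).measurable.aestronglyMeasurable)).restrict
  · filter_upwards [hbound, ae_restrict_mem hS] with t ht htS
    rw [norm_smul, Real.norm_eq_abs]
    exact mul_le_mul ht (hM t (hsub htS)) (norm_nonneg _) (le_trans (abs_nonneg _) ht)

theorem integrableOn_bdd {T : ℝ} {S : Set ℝ} (hS : MeasurableSet S)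
    (hsub : S ⊆ Set.Icc (0:ℝ) T) {w : ℝ → ℝ} (hw : Measurable w) {Cb : ℝ}
    (hbound : ∀ᵐ t ∂(volume.restrict S), |w t| ≤ Cb) :
    IntegrableOn w S := by
  have hfin : volume S < ⊤ :=
    lt_of_le_of_lt (measure_mono hsub) (by rw [Real.volume_Icc]; exact ENNReal.ofReal_lt_top)
  have hconst : IntegrableOn (fun _ : ℝ => Cb) S := by
    exact integrableOn_const hfin.ne
  apply Integrable.mono' hconst hw.aestronglyMeasurable.restrict
  filter_upwards [hbound] with t ht
  rwa [Real.norm_eq_abs]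

/-- The key capacity lemma: controls supported on a positive measure subset of `[0,T]`
reach a whole ball around the origin. -/
theorem capacity (T : ℝ)
    (hctrb : Submodule.span ℝ (Set.range fun i : Fin n => (A ^ (i : ℕ)).mulVec b) = ⊤)
    (E₀ : Set ℝ) (hE₀m : MeasurableSet E₀) (hE₀sub : E₀ ⊆ Set.Icc (0:ℝ) T)
    (hE₀pos : 0 < volume E₀) :
    ∃ r : ℝ, 0 < r ∧ ∀ d : Fin n → ℝ, ‖d‖ ≤ r →
      ∃ z : ℝ → ℝ, Measurable z ∧ (∀ t, |z t| ≤ 1) ∧ (∫ s in E₀, z s • g A b s) = d := by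
  classical
  set C : Set (Fin n → ℝ) :=
    {x | ∃ z : ℝ → ℝ, Measurable z ∧ (∀ t, |z t| ≤ 1) ∧ (∫ s in E₀, z s • g A b s) = x}
    with hCdef
  have hintz : ∀ z : ℝ → ℝ, Measurable z → (∀ t, |z t| ≤ 1) →
      IntegrableOn (fun s => z s • g A b s) E₀ := by
    intro z hz hz1
    exact integrableOn_smul_g A b hE₀m hE₀sub hz (Filter.Eventually.of_forall hz1)
  have h0 : (0 : Fin n → ℝ) ∈ C := by
    refine ⟨0, measurable_const, by norm_num, by simp⟩
  have hsym : ∀ x ∈ C, -x ∈ C := by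
    rintro x ⟨z, hz, hz1, hzx⟩
    refine ⟨-z, hz.neg, fun t => by rw [Pi.neg_apply, abs_neg]; exact hz1 t, ?_⟩
    rw [← hzx, ← integral_neg]
    congr 1; funext s; rw [Pi.neg_apply, neg_smul]
  have hconv : Convex ℝ C := by
    rintro x ⟨z₁, hz₁, hz₁1, hz₁x⟩ y ⟨z₂, hz₂, hz₂1, hz₂y⟩ p q hp hq hpq
    refine ⟨fun s => p * z₁ s + q * z₂ s, (hz₁.const_mul p).add (hz₂.const_mul q),
      fun t => ?_, ?_⟩
    · calc |p * z₁ t + q * z₂ t| ≤ |p * z₁ t| + |q * z₂ t| := abs_add_le _ _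
        _ = p * |z₁ t| + q * |z₂ t| := by
            rw [abs_mul, abs_mul, abs_of_nonneg hp, abs_of_nonneg hq]
        _ ≤ p * 1 + q * 1 := by
            gcongr
            exacts [hz₁1 t, hz₂1 t]
        _ = 1 := by rw [mul_one, mul_one, hpq]
    · have heq : (fun s => (p * z₁ s + q * z₂ s) • g A b s) =
          fun s => p • (z₁ s • g A b s) + q • (z₂ s • g A b s) := by
        funext s; rw [add_smul, mul_smul, mul_smul]
      have h1' : IntegrableOn (fun s => p • (z₁ s • g A b s)) E₀ := (hintz z₁ hz₁ hz₁1).smul p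
      have h2' : IntegrableOn (fun s => q • (z₂ s • g A b s)) E₀ := (hintz z₂ hz₂ hz₂1).smul q
      rw [heq, integral_add h1' h2', integral_smul, integral_smul, hz₁x, hz₂y]
  have hspan : Submodule.span ℝ C = ⊤ := by
    by_contra hC
    obtain ⟨φ, hφne, hφmap⟩ :=
      Submodule.exists_dual_map_eq_bot_of_lt_top (lt_top_iff_ne_top.2 hC) inferInstance
    have hφC : ∀ x ∈ C, φ x = 0 := by
      intro x hx
      have : φ x ∈ Submodule.map φ (Submodule.span ℝ C) :=
        Submodule.mem_map_of_mem (Submodule.subset_span hx)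
      rw [hφmap] at this
      simpa using this
    -- pick the sign control
    set z : ℝ → ℝ := fun s => Real.sign (φ (g A b s)) with hzdef
    have hφcont : Continuous fun s => φ (g A b s) :=
      (LinearMap.continuous_of_finiteDimensional φ).comp (g_continuous A b)
    have hzmeas : Measurable z := measurable_sign_comp hφcont.measurable
    have hz1 : ∀ t, |z t| ≤ 1 := fun t => abs_sign_le _
    have hmem : (∫ s in E₀, z s • g A b s) ∈ C := ⟨z, hzmeas, hz1, rfl⟩
    have hint0 : (∫ s in E₀, |φ (g A b s)|) = 0 := by
      have h1 := hφC _ hmem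
      set φL := LinearMap.toContinuousLinearMap φ with hφL
      have hφLapp : ∀ v, φL v = φ v := fun v => rfl
      have h2 : φL (∫ s in E₀, z s • g A b s) = ∫ s in E₀, φL (z s • g A b s) :=
        (φL.integral_comp_comm (hintz z hzmeas hz1)).symm
      rw [hφLapp] at h2
      rw [h1] at h2
      have h3 : (fun s => φL (z s • g A b s)) = fun s => |φ (g A b s)| := by
        funext s
        rw [φL.map_smul, smul_eq_mul, hφLapp, hzdef, sign_mul_self]
      rw [h3] at h2
      exact h2.symm
    have hintabs : IntegrableOn (fun s => |φ (g A b s)|) E₀ := by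
      obtain ⟨M, hM0, hM⟩ := g_bound A b T
      apply integrableOn_bdd hE₀m hE₀sub hφcont.abs.measurable
        (Cb := ‖LinearMap.toContinuousLinearMap φ‖ * M)
      filter_upwards [ae_restrict_mem hE₀m] with t ht
      rw [abs_abs]
      calc |φ (g A b t)| = ‖(LinearMap.toContinuousLinearMap φ) (g A b t)‖ := rfl
        _ ≤ ‖LinearMap.toContinuousLinearMap φ‖ * ‖g A b t‖ :=
            ContinuousLinearMap.le_opNorm _ _
        _ ≤ ‖LinearMap.toContinuousLinearMap φ‖ * M := by
            gcongr; exact hM t (hE₀sub ht)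
    have hae : ∀ᵐ s ∂(volume.restrict E₀), φ (g A b s) = 0 := by
      have := (integral_eq_zero_iff_of_nonneg (fun s => abs_nonneg _) hintabs).1 hint0
      filter_upwards [this] with s hs using abs_eq_zero.1 hs
    -- the zero set has positive measure
    set Sz : Set ℝ := E₀ ∩ {s | φ (g A b s) = 0} with hSz
    have hbadm : MeasurableSet {s : ℝ | ¬ φ (g A b s) = 0} :=
      (hφcont.measurable (MeasurableSet.singleton 0)).compl
    have hbad0 : volume ({s : ℝ | ¬ φ (g A b s) = 0} ∩ E₀) = 0 := by
      have := hae
      rw [MeasureTheory.ae_iff] at this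
      rw [Measure.restrict_apply hbadm] at this
      simpa using this
    have hSzpos : 0 < volume Sz := by
      by_contra hSz0
      push_neg at hSz0
      have h0' : volume Sz = 0 := le_antisymm hSz0 zero_le
      have : volume E₀ ≤ volume Sz + volume ({s : ℝ | ¬ φ (g A b s) = 0} ∩ E₀) := by
        refine le_trans (measure_mono ?_) (measure_union_le _ _)
        intro t ht
        by_cases hc : φ (g A b t) = 0
        · exact Or.inl ⟨ht, hc⟩
        · exact Or.inr ⟨hc, ht⟩
      rw [h0', hbad0, add_zero] at this
      exact absurd (le_antisymm this zero_le) (ne_of_gt hE₀pos)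
    have hSzinf : Sz.Infinite := by
      intro hfin
      exact absurd (hfin.countable.measure_zero volume) (ne_of_gt hSzpos)
    obtain ⟨x₀, _, hacc⟩ := hSzinf.exists_accPt_of_subset_isCompact isCompact_Icc
      (fun t ht => hE₀sub ht.1)
    have hfreq : ∃ᶠ y in nhdsWithin x₀ {x₀}ᶜ, φ (g A b y) = 0 := by
      have h1 : ∃ᶠ y in nhdsWithin x₀ {x₀}ᶜ, y ∈ Sz := Filter.frequently_iff_neBot.2 hacc
      exact h1.mono fun y hy => hy.2
    have hzero := (g_analytic A b φ).eqOn_zero_of_preconnected_of_frequently_eq_zero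
      isPreconnected_univ (Set.mem_univ x₀) hfreq
    have hallzero : ∀ s : ℝ, φ (g A b s) = 0 := fun s => hzero (Set.mem_univ s)
    have hpow : ∀ k : ℕ, φ ((A ^ k).mulVec b) = 0 := phi_pow_eq_zero A b φ hallzero
    have hφ0 : φ = 0 := by
      have hker : Submodule.span ℝ (Set.range fun i : Fin n => (A ^ (i : ℕ)).mulVec b) ≤
          LinearMap.ker φ := by
        rw [Submodule.span_le]
        rintro x ⟨i, rfl⟩
        exact hpow i
      rw [hctrb] at hker
      refine LinearMap.ext fun x => ?_
      have : x ∈ LinearMap.ker φ := hker (by trivial)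
      simpa using this
    exact hφne hφ0
  obtain ⟨r, hr, hball⟩ := ball_subset_of_convex C h0 hsym hconv hspan
  exact ⟨r, hr, fun d hd => hball d hd⟩

/-- Bang-bang approximation on a partitioned interval. -/
theorem riemann (T : ℝ) {u : ℝ → ℝ} (hu : Measurable u)
    (hu1 : ∀ᵐ t ∂(volume.restrict (Set.Icc (0:ℝ) T)), |u t| ≤ 1)
    {η h' : ℝ} (hη : 0 ≤ η) (hh' : 0 ≤ h')
    (hmod : ∀ s ∈ Set.Icc (0:ℝ) T, ∀ t ∈ Set.Icc (0:ℝ) T, |s - t| ≤ h' → ‖g A b s - g A b t‖ ≤ η)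
    (N : ℕ) :
    ∀ p : ℝ, 0 ≤ p → p + N * h' ≤ T →
    ∃ (v : ℝ → ℝ) (F : Set ℝ), Measurable v ∧ (∀ t, |v t| ≤ 1) ∧ IsClosed F ∧
      F ⊆ Set.Icc p (p + N * h') ∧ (∀ t, t ∉ F → v t = 0) ∧
      volume F ≤ ENNReal.ofReal (∫ t in Set.Icc p (p + N * h'), |u t|) ∧
      ‖(∫ s in Set.Icc p (p + N * h'), v s • g A b s) -
        ∫ s in Set.Icc p (p + N * h'), u s • g A b s‖ ≤ N * (2 * η * h') := by
  induction N with
  | zero =>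
    intro p hp hpT
    refine ⟨0, ∅, measurable_const, by norm_num, isClosed_empty, Set.empty_subset _,
      fun t _ => rfl, ?_, ?_⟩
    · simp
    · have hzero : volume.restrict (Set.Icc p (p + (0:ℕ) * h')) = 0 := by
        rw [Measure.restrict_eq_zero]
        simp [Real.volume_Icc]
      rw [hzero]
      simp
  | succ N ih =>
    intro p hp hpT
    have hcast : p + ((N + 1 : ℕ) : ℝ) * h' = (p + (N:ℝ) * h') + h' := by push_cast; ring
    rw [hcast]
    set q : ℝ := p + (N:ℝ) * h' with hqdef
    have hpq : p ≤ q := by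
      rw [hqdef]; nlinarith [Nat.cast_nonneg (α := ℝ) N]
    have hq0 : 0 ≤ q := le_trans hp hpq
    have hqT : q + h' ≤ T := by rw [hqdef]; rw [hcast] at hpT; exact hpT
    have hqh : q ≤ q + h' := by linarith
    have hIH := ih p hp (by linarith)
    obtain ⟨v₁, F₁, hv₁meas, hv₁1, hF₁closed, hF₁sub, hv₁supp, hF₁vol, hv₁err⟩ := hIH
    set I₂ : Set ℝ := Set.Icc q (q + h') with hI₂def
    have hI₂sub : I₂ ⊆ Set.Icc (0:ℝ) T := Set.Icc_subset_Icc hq0 hqT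
    have hu1' : ∀ᵐ t ∂(volume.restrict I₂), |u t| ≤ 1 :=
      ae_restrict_of_ae_restrict_of_subset hI₂sub hu1
    have hintu2 : IntegrableOn u I₂ := integrableOn_bdd measurableSet_Icc hI₂sub hu hu1'
    have hvolI₂ : volume I₂ = ENNReal.ofReal h' := by
      rw [hI₂def, Real.volume_Icc]; congr 1; ring
    set c : ℝ := ∫ t in I₂, u t with hcdef
    have hc_abs : |c| ≤ ∫ t in I₂, |u t| := by
      rw [hcdef]
      calc |∫ t in I₂, u t| = ‖∫ t in I₂, u t‖ := (Real.norm_eq_abs _).symm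
        _ ≤ ∫ t in I₂, ‖u t‖ := norm_integral_le_integral_norm _
        _ = ∫ t in I₂, |u t| := by simp [Real.norm_eq_abs]
    have hcabs' : (∫ t in I₂, |u t|) ≤ h' := by
      have hint1 : IntegrableOn (fun _ : ℝ => (1:ℝ)) I₂ := by
        exact integrableOn_const (by rw [hvolI₂]; exact ENNReal.ofReal_ne_top)
      calc (∫ t in I₂, |u t|) ≤ ∫ t in I₂, (1:ℝ) := integral_mono_ae hintu2.abs hint1 hu1'
        _ = h' := by rw [setIntegral_const, measureReal_def, hvolI₂, ENNReal.toReal_ofReal hh', smul_eq_mul, mul_one]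
    have hc : |c| ≤ h' := le_trans hc_abs hcabs'
    -- the single pulse
    set v₂ : ℝ → ℝ := fun t => if t ∈ Set.Ioc q (q + |c|) then Real.sign c else 0 with hv₂def
    have hv₂meas : Measurable v₂ :=
      Measurable.ite measurableSet_Ioc measurable_const measurable_const
    have hv₂1 : ∀ t, |v₂ t| ≤ 1 := by
      intro t
      simp only [hv₂def]
      by_cases ht : t ∈ Set.Ioc q (q + |c|)
      · rw [if_pos ht]; exact abs_sign_le c
      · rw [if_neg ht]; norm_num
    set F₂ : Set ℝ := Set.Icc q (q + |c|) with hF₂def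
    have hF₂sub : F₂ ⊆ Set.Icc p (q + h') :=
      Set.Icc_subset_Icc hpq (by linarith)
    have hv₂supp : ∀ t, t ∉ F₂ → v₂ t = 0 := by
      intro t ht
      simp only [hv₂def]; rw [if_neg (fun hmem => ht (Set.Ioc_subset_Icc_self hmem))]
    have hIocsub : Set.Ioc q (q + |c|) ⊆ I₂ := by
      intro t ht
      exact ⟨le_of_lt ht.1, le_trans ht.2 (by linarith)⟩
    -- pointwise indicator form
    have hv₂g : ∀ w : ℝ → (Fin n → ℝ), ∀ t, v₂ t • w t =
        Set.indicator (Set.Ioc q (q + |c|)) (fun t => Real.sign c • w t) t := by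
      intro w t
      by_cases ht : t ∈ Set.Ioc q (q + |c|)
      · simp only [hv₂def]; rw [if_pos ht, Set.indicator_of_mem ht]
      · simp only [hv₂def]; rw [if_neg ht, Set.indicator_of_notMem ht, zero_smul]
    have hv₂int : (∫ t in I₂, v₂ t) = c := by
      have : (fun t => v₂ t) = fun t => Set.indicator (Set.Ioc q (q + |c|))
          (fun _ => Real.sign c) t := by
        funext t
        by_cases ht : t ∈ Set.Ioc q (q + |c|)
        · simp only [hv₂def]; rw [if_pos ht, Set.indicator_of_mem ht]
        · simp only [hv₂def]; rw [if_neg ht, Set.indicator_of_notMem ht]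
      rw [this, setIntegral_indicator measurableSet_Ioc,
        Set.inter_eq_self_of_subset_right hIocsub, setIntegral_const, measureReal_def, Real.volume_Ioc]
      rw [ENNReal.toReal_ofReal (by simp [abs_nonneg] : (0:ℝ) ≤ q + |c| - q)]
      have h9 : q + |c| - q = |c| := by ring
      rw [h9, smul_eq_mul, abs_mul_sign]
    -- integrability on I₂
    have hv₂gi : IntegrableOn (fun s => v₂ s • g A b s) I₂ :=
      integrableOn_smul_g A b measurableSet_Icc hI₂sub hv₂meas
        (Filter.Eventually.of_forall hv₂1)
    have hugi : IntegrableOn (fun s => u s • g A b s) I₂ :=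
      integrableOn_smul_g A b measurableSet_Icc hI₂sub hu hu1'
    have hintv₂ : IntegrableOn v₂ I₂ :=
      integrableOn_bdd measurableSet_Icc hI₂sub hv₂meas (Filter.Eventually.of_forall hv₂1)
    -- error on I₂
    have herr₂ : ‖(∫ s in I₂, v₂ s • g A b s) - ∫ s in I₂, u s • g A b s‖ ≤ 2 * η * h' := by
      have hdiff_int : IntegrableOn (fun s => (v₂ s - u s) • g A b s) I₂ := by
        apply integrableOn_smul_g A b measurableSet_Icc hI₂sub (hv₂meas.sub hu) (Cb := 2)
        filter_upwards [hu1'] with t ht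
        calc |v₂ t - u t| ≤ |v₂ t| + |u t| := abs_sub _ _
          _ ≤ 1 + 1 := add_le_add (hv₂1 t) ht
          _ = 2 := by norm_num
      have hconst_int : IntegrableOn (fun s => (v₂ s - u s) • g A b q) I₂ := by
        have h1 : IntegrableOn (fun s => v₂ s - u s) I₂ := hintv₂.sub hintu2
        exact h1.smul_const _
      have heq1 : (∫ s in I₂, v₂ s • g A b s) - ∫ s in I₂, u s • g A b s =
          ∫ s in I₂, (v₂ s - u s) • g A b s := by
        rw [← integral_sub hv₂gi hugi]
        congr 1; funext s; rw [sub_smul]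
      have heq2 : (∫ s in I₂, (v₂ s - u s) • g A b s) =
          ∫ s in I₂, (v₂ s - u s) • (g A b s - g A b q) := by
        have hsplit : (fun s => (v₂ s - u s) • (g A b s - g A b q)) =
            fun s => (v₂ s - u s) • g A b s - (v₂ s - u s) • g A b q := by
          funext s; rw [smul_sub]
        rw [hsplit, integral_sub hdiff_int hconst_int, integral_smul_const,
          integral_sub hintv₂ hintu2, hv₂int, hcdef, sub_self, zero_smul, sub_zero]
      rw [heq1, heq2]
      have hbound : ∀ᵐ s ∂(volume.restrict I₂),
          ‖(v₂ s - u s) • (g A b s - g A b q)‖ ≤ 2 * η := by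
        filter_upwards [hu1', ae_restrict_mem measurableSet_Icc] with s hs hsI
        rw [norm_smul, Real.norm_eq_abs]
        have h1 : |v₂ s - u s| ≤ 2 := by
          calc |v₂ s - u s| ≤ |v₂ s| + |u s| := abs_sub _ _
            _ ≤ 1 + 1 := add_le_add (hv₂1 s) hs
            _ = 2 := by norm_num
        have h2 : ‖g A b s - g A b q‖ ≤ η := by
          apply hmod s (hI₂sub hsI) q ⟨hq0, le_trans hqh hqT⟩
          have := hsI.1; have := hsI.2
          rw [abs_sub_le_iff]
          constructor <;> [linarith; linarith]
        exact mul_le_mul h1 h2 (norm_nonneg _) (by norm_num)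
      have hnormint : IntegrableOn (fun s => ‖(v₂ s - u s) • (g A b s - g A b q)‖) I₂ := by
        have hdiff_int : IntegrableOn (fun s => (v₂ s - u s) • (g A b s - g A b q)) I₂ := by
          have hsplit : (fun s => (v₂ s - u s) • (g A b s - g A b q)) =
              fun s => (v₂ s - u s) • g A b s - (v₂ s - u s) • g A b q := by
            funext s; rw [smul_sub]
          rw [hsplit]
          apply Integrable.sub
          · apply integrableOn_smul_g A b measurableSet_Icc hI₂sub (hv₂meas.sub hu) (Cb := 2)
            filter_upwards [hu1'] with t ht
            calc |v₂ t - u t| ≤ |v₂ t| + |u t| := abs_sub _ _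
              _ ≤ 1 + 1 := add_le_add (hv₂1 t) ht
              _ = 2 := by norm_num
          · exact (hintv₂.sub hintu2).smul_const _
        exact hdiff_int.norm
      have hconst1 : IntegrableOn (fun _ : ℝ => 2 * η) I₂ := by
        exact integrableOn_const (by rw [hvolI₂]; exact ENNReal.ofReal_ne_top)
      calc ‖∫ s in I₂, (v₂ s - u s) • (g A b s - g A b q)‖
          ≤ ∫ s in I₂, ‖(v₂ s - u s) • (g A b s - g A b q)‖ := norm_integral_le_integral_norm _
        _ ≤ ∫ _ in I₂, 2 * η := integral_mono_ae hnormint hconst1 hbound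
        _ = 2 * η * h' := by
            rw [setIntegral_const, measureReal_def, hvolI₂, ENNReal.toReal_ofReal hh', smul_eq_mul, mul_comm]
    -- combine
    refine ⟨fun t => v₁ t + v₂ t, F₁ ∪ F₂, hv₁meas.add hv₂meas, ?_, hF₁closed.union isClosed_Icc,
      ?_, ?_, ?_, ?_⟩
    · intro t
      show |v₁ t + v₂ t| ≤ 1
      by_cases ht : t ∈ Set.Ioc q (q + |c|)
      · have hv₁t : v₁ t = 0 := by
          apply hv₁supp
          intro hmem
          have := (hF₁sub hmem).2
          exact absurd ht.1 (not_lt.2 this)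
        rw [hv₁t, zero_add]; exact hv₂1 t
      · have hv₂t : v₂ t = 0 := by simp only [hv₂def]; rw [if_neg ht]
        rw [hv₂t, add_zero]; exact hv₁1 t
    · apply Set.union_subset
      · exact hF₁sub.trans (Set.Icc_subset_Icc_right (by linarith))
      · exact hF₂sub
    · intro t ht
      show v₁ t + v₂ t = 0
      rw [Set.mem_union] at ht
      push_neg at ht
      rw [hv₁supp t ht.1, hv₂supp t ht.2, add_zero]
    · -- volume bound
      have hsplit : Set.Icc p (q + h') = Set.Icc p q ∪ I₂ :=
        (Set.Icc_union_Icc_eq_Icc hpq hqh).symm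
      have hdisj : volume (Set.Icc p q ∩ I₂) = 0 := by
        refine measure_mono_null ?_ (measure_singleton q)
        rintro t ⟨⟨_, h1⟩, h2, _⟩
        exact le_antisymm h1 h2
      have hint_pq : IntegrableOn (fun t => |u t|) (Set.Icc p q) := by
        apply IntegrableOn.mono_set (t := Set.Icc (0:ℝ) T)
        · exact (integrableOn_bdd measurableSet_Icc Set.Subset.rfl hu hu1).abs
        · exact Set.Icc_subset_Icc hp (by linarith)
      have hsum : (∫ t in Set.Icc p (q + h'), |u t|) =
          (∫ t in Set.Icc p q, |u t|) + ∫ t in I₂, |u t| := by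
        rw [hsplit]
        exact integral_union_ae hdisj measurableSet_Icc.nullMeasurableSet hint_pq hintu2.abs
      rw [hsum]
      calc volume (F₁ ∪ F₂) ≤ volume F₁ + volume F₂ := measure_union_le _ _
        _ ≤ ENNReal.ofReal (∫ t in Set.Icc p q, |u t|) + ENNReal.ofReal (∫ t in I₂, |u t|) := by
            apply add_le_add hF₁vol
            rw [hF₂def, Real.volume_Icc]
            apply ENNReal.ofReal_le_ofReal
            calc q + |c| - q = |c| := by ring
              _ ≤ _ := hc_abs
        _ = ENNReal.ofReal ((∫ t in Set.Icc p q, |u t|) + ∫ t in I₂, |u t|) := by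
            rw [ENNReal.ofReal_add (integral_nonneg fun t => abs_nonneg _)
              (integral_nonneg fun t => abs_nonneg _)]
    · -- error bound
      have hsplit : Set.Icc p (q + h') = Set.Icc p q ∪ I₂ :=
        (Set.Icc_union_Icc_eq_Icc hpq hqh).symm
      have hdisj : MeasureTheory.AEDisjoint volume (Set.Icc p q) I₂ := by
        refine measure_mono_null ?_ (measure_singleton q)
        rintro t ⟨⟨_, h1⟩, h2, _⟩
        exact le_antisymm h1 h2
      set vv : ℝ → ℝ := fun t => v₁ t + v₂ t with hvvdef
      have hvv1 : ∀ t, |vv t| ≤ 1 := by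
        intro t
        show |v₁ t + v₂ t| ≤ 1
        by_cases ht : t ∈ Set.Ioc q (q + |c|)
        · have hv₁t : v₁ t = 0 := by
            apply hv₁supp
            intro hmem
            exact absurd ht.1 (not_lt.2 (hF₁sub hmem).2)
          rw [hv₁t, zero_add]; exact hv₂1 t
        · have hv₂t : v₂ t = 0 := by simp only [hv₂def]; rw [if_neg ht]
          rw [hv₂t, add_zero]; exact hv₁1 t
      have hPQsub : Set.Icc p q ⊆ Set.Icc (0:ℝ) T := Set.Icc_subset_Icc hp (by linarith)
      have hvv_int1 : IntegrableOn (fun s => vv s • g A b s) (Set.Icc p q) :=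
        integrableOn_smul_g A b measurableSet_Icc hPQsub (hv₁meas.add hv₂meas)
          (Filter.Eventually.of_forall hvv1)
      have hvv_int2 : IntegrableOn (fun s => vv s • g A b s) I₂ :=
        integrableOn_smul_g A b measurableSet_Icc hI₂sub (hv₁meas.add hv₂meas)
          (Filter.Eventually.of_forall hvv1)
      have hu_int1 : IntegrableOn (fun s => u s • g A b s) (Set.Icc p q) :=
        integrableOn_smul_g A b measurableSet_Icc hPQsub hu
          (ae_restrict_of_ae_restrict_of_subset hPQsub hu1)
      have hvvsplit : (∫ s in Set.Icc p (q + h'), vv s • g A b s) =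
          (∫ s in Set.Icc p q, vv s • g A b s) + ∫ s in I₂, vv s • g A b s := by
        rw [hsplit]
        exact integral_union_ae hdisj measurableSet_Icc.nullMeasurableSet hvv_int1 hvv_int2
      have husplit : (∫ s in Set.Icc p (q + h'), u s • g A b s) =
          (∫ s in Set.Icc p q, u s • g A b s) + ∫ s in I₂, u s • g A b s := by
        rw [hsplit]
        exact integral_union_ae hdisj measurableSet_Icc.nullMeasurableSet hu_int1 hugi
      have hvv1eq : (∫ s in Set.Icc p q, vv s • g A b s) =
          ∫ s in Set.Icc p q, v₁ s • g A b s := by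
        apply setIntegral_congr_fun measurableSet_Icc
        intro t ht
        have hv₂t : v₂ t = 0 := by
          simp only [hv₂def]
          rw [if_neg]
          intro hmem
          exact absurd ht.2 (not_le.2 hmem.1)
        show (v₁ t + v₂ t) • g A b t = v₁ t • g A b t
        rw [hv₂t, add_zero]
      have hvv2eq : (∫ s in I₂, vv s • g A b s) = ∫ s in I₂, v₂ s • g A b s := by
        apply setIntegral_congr_ae measurableSet_Icc
        have hqnull : ∀ᵐ t : ℝ ∂volume, t ≠ q := by
          rw [MeasureTheory.ae_iff]
          have : {t : ℝ | ¬ t ≠ q} = {q} := by ext t; simp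
          rw [this]
          exact measure_singleton q
        filter_upwards [hqnull] with t htq htI
        have hv₁t : v₁ t = 0 := by
          apply hv₁supp
          intro hmem
          have h1 := (hF₁sub hmem).2
          have h2 := htI.1
          exact htq (le_antisymm h1 h2)
        show (v₁ t + v₂ t) • g A b t = v₂ t • g A b t
        rw [hv₁t, zero_add]
      rw [hvvsplit, husplit, hvv1eq, hvv2eq]
      calc ‖((∫ s in Set.Icc p q, v₁ s • g A b s) + ∫ s in I₂, v₂ s • g A b s) -
            ((∫ s in Set.Icc p q, u s • g A b s) + ∫ s in I₂, u s • g A b s)‖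
          = ‖((∫ s in Set.Icc p q, v₁ s • g A b s) - ∫ s in Set.Icc p q, u s • g A b s) +
            ((∫ s in I₂, v₂ s • g A b s) - ∫ s in I₂, u s • g A b s)‖ := by
            congr 1; abel
        _ ≤ ‖(∫ s in Set.Icc p q, v₁ s • g A b s) - ∫ s in Set.Icc p q, u s • g A b s‖ +
            ‖(∫ s in I₂, v₂ s • g A b s) - ∫ s in I₂, u s • g A b s‖ := norm_add_le _ _
        _ ≤ N * (2 * η * h') + 2 * η * h' := add_le_add hv₁err herr₂
        _ = (N + 1 : ℕ) * (2 * η * h') := by push_cast; ring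

/-- Choice of a short interval on which a positive-measure set has positive measure. -/
theorem exists_small_interval (T : ℝ) (hT : 0 < T) (E : Set ℝ) (hEsub : E ⊆ Set.Icc (0:ℝ) T)
    (hEpos : 0 < volume E) (ε : ℝ) (hε : 0 < ε) :
    ∃ a b' : ℝ, 0 ≤ a ∧ a < b' ∧ b' ≤ T ∧ b' - a ≤ ε ∧ 0 < volume (E ∩ Set.Ioo a b') := by
  by_contra hcon
  push_neg at hcon
  set K : ℕ := max 1 ⌈T / ε⌉₊ with hK
  have hK1 : 1 ≤ K := le_max_left _ _
  have hKpos : (0:ℝ) < K := by exact_mod_cast lt_of_lt_of_le one_pos hK1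
  set δ : ℝ := T / K with hδ
  have hδpos : 0 < δ := div_pos hT hKpos
  have hKδ : (K:ℝ) * δ = T := by
    rw [hδ]; field_simp
  have hδε : δ ≤ ε := by
    rw [hδ, div_le_iff₀ hKpos]
    have h1 : T / ε ≤ (⌈T / ε⌉₊ : ℝ) := Nat.le_ceil _
    have h2 : ((⌈T / ε⌉₊ : ℕ) : ℝ) ≤ K := by exact_mod_cast le_max_right 1 ⌈T / ε⌉₊
    calc T = (T / ε) * ε := by field_simp
      _ ≤ (K:ℝ) * ε := by
          apply mul_le_mul_of_nonneg_right _ hε.le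
          linarith
      _ = ε * K := by ring
  -- each short open interval carries zero measure of E
  have hzero : ∀ j : ℕ, j < K → volume (E ∩ Set.Ioo ((j:ℝ) * δ) (((j:ℕ)+1 : ℝ) * δ)) = 0 := by
    intro j hj
    have h0a : (0:ℝ) ≤ (j:ℝ) * δ := by positivity
    have hab : (j:ℝ) * δ < ((j:ℝ)+1) * δ := by nlinarith
    have hbT : ((j:ℝ)+1) * δ ≤ T := by
      rw [← hKδ]
      have : (j:ℝ) + 1 ≤ K := by exact_mod_cast hj
      nlinarith
    have hlen : ((j:ℝ)+1) * δ - (j:ℝ) * δ ≤ ε := by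
      have : ((j:ℝ)+1) * δ - (j:ℝ) * δ = δ := by ring
      linarith
    have := hcon ((j:ℝ) * δ) (((j:ℝ)+1) * δ) h0a hab hbT hlen
    exact le_antisymm this zero_le
  -- but these intervals and the grid points cover E
  have hcover : E ⊆ (⋃ j ∈ Finset.range K, E ∩ Set.Ioo ((j:ℝ) * δ) (((j:ℝ)+1) * δ)) ∪
      (⋃ j ∈ Finset.range (K+1), {((j:ℝ) * δ)}) := by
    intro t ht
    have htI := hEsub ht
    have ht0 : (0:ℝ) ≤ t := htI.1
    have htT : t ≤ T := htI.2
    set j : ℕ := ⌊t / δ⌋₊ with hj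
    have hjle : (j:ℝ) ≤ t / δ := Nat.floor_le (by positivity)
    have hjlt : t / δ < (j:ℝ) + 1 := Nat.lt_floor_add_one _
    have hjδle : (j:ℝ) * δ ≤ t := by
      calc (j:ℝ) * δ ≤ (t / δ) * δ := by nlinarith
        _ = t := by field_simp
    have htlt : t < ((j:ℝ)+1) * δ := by
      calc t = (t / δ) * δ := by field_simp
        _ < ((j:ℝ)+1) * δ := by nlinarith
    by_cases heq : t = (j:ℝ) * δ
    · right
      have hjK : j ≤ K := by
        have h3 : (j:ℝ) ≤ T / δ := le_trans hjle (by gcongr)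
        have hTδ : T / δ = K := by rw [hδ]; field_simp
        rw [hTδ] at h3
        exact_mod_cast h3
      refine Set.mem_iUnion₂.2 ⟨j, ?_, by simpa using heq⟩
      simp only [Finset.mem_range]
      omega
    · left
      have hjK : j < K := by
        by_contra hjK
        push_neg at hjK
        have : (K:ℝ) ≤ (j:ℝ) := by exact_mod_cast hjK
        have h1 : T ≤ (j:ℝ) * δ := by
          rw [← hKδ]; nlinarith
        have h2 : t = (j:ℝ) * δ := le_antisymm (le_trans htT h1) hjδle
        exact heq h2
      refine Set.mem_iUnion₂.2
        ⟨j, ?_, ht, lt_of_le_of_ne hjδle (fun hh => heq hh.symm), htlt⟩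
      simpa only [Finset.mem_range] using hjK
  have hEzero : volume E = 0 := by
    apply measure_mono_null hcover
    apply measure_union_null
    · apply (measure_biUnion_null_iff (Finset.range K).countable_toSet).2
      intro j hj
      simp only [Finset.mem_coe, Finset.mem_range] at hj
      exact hzero j hj
    · apply (measure_biUnion_null_iff (Finset.range (K+1)).countable_toSet).2
      intro j _
      exact measure_singleton _
  exact absurd hEzero (ne_of_gt hEpos)


/-! ### Lemmas about the given definitions -/

theorem steer_eq (n : ℕ) (A : Matrix (Fin n) (Fin n) ℝ) (b : Fin n → ℝ) (T : ℝ) (w : ℝ → ℝ) :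
    steer n A b T w = ∫ s in Set.Icc (0:ℝ) T, w s • g A b s := rfl

theorem L1norm_nonneg (T : ℝ) (u : ℝ → ℝ) : 0 ≤ L1norm T u :=
  integral_nonneg fun t => abs_nonneg _

theorem L0norm_nonneg (T : ℝ) (u : ℝ → ℝ) : 0 ≤ L0norm T u := ENNReal.toReal_nonneg

theorem sparseSupp_subset (T : ℝ) (u : ℝ → ℝ) : sparseSupp T u ⊆ Set.Icc (0:ℝ) T :=
  closure_minimal (fun t ht => ht.1) isClosed_Icc

theorem L0norm_le (T : ℝ) (hT : 0 ≤ T) (u : ℝ → ℝ) : L0norm T u ≤ T := by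
  have h1 : volume (sparseSupp T u) ≤ ENNReal.ofReal T := by
    calc volume (sparseSupp T u) ≤ volume (Set.Icc (0:ℝ) T) :=
          measure_mono (sparseSupp_subset T u)
      _ = ENNReal.ofReal (T - 0) := Real.volume_Icc
      _ = ENNReal.ofReal T := by rw [sub_zero]
  exact ENNReal.toReal_le_of_le_ofReal hT h1

/-- The easy inequality: `‖u‖₁ ≤ ‖u‖₀` for a control. -/
theorem L1_le_L0 (T : ℝ) (hT : 0 ≤ T) {u : ℝ → ℝ} (hu : IsControl T u) :
    L1norm T u ≤ L0norm T u := by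
  set S := sparseSupp T u with hS
  have hSclosed : IsClosed S := isClosed_closure
  have hSm : MeasurableSet S := hSclosed.measurableSet
  have hfin : volume (Set.Icc (0:ℝ) T) < ⊤ := by
    rw [Real.volume_Icc]; exact ENNReal.ofReal_lt_top
  have hconst1 : IntegrableOn (fun _ : ℝ => (1:ℝ)) (Set.Icc (0:ℝ) T) := by
    exact integrableOn_const hfin.ne
  have hind_int : IntegrableOn (Set.indicator S fun _ => (1:ℝ)) (Set.Icc (0:ℝ) T) :=
    hconst1.indicator hSm
  have hu_int : IntegrableOn (fun t => |u t|) (Set.Icc (0:ℝ) T) :=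
    (integrableOn_bdd measurableSet_Icc Set.Subset.rfl hu.1 hu.2).abs
  have hle : ∀ᵐ t ∂(volume.restrict (Set.Icc (0:ℝ) T)),
      |u t| ≤ Set.indicator S (fun _ => (1:ℝ)) t := by
    filter_upwards [hu.2, ae_restrict_mem measurableSet_Icc] with t ht htIcc
    by_cases hz : u t = 0
    · rw [hz, abs_zero]
      exact Set.indicator_nonneg (fun _ _ => zero_le_one) t
    · have htS : t ∈ S := subset_closure ⟨htIcc, hz⟩
      rw [Set.indicator_of_mem htS]
      exact ht
  calc L1norm T u ≤ ∫ t in Set.Icc (0:ℝ) T, Set.indicator S (fun _ => (1:ℝ)) t :=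
        integral_mono_ae hu_int hind_int hle
    _ = ∫ t in Set.Icc (0:ℝ) T ∩ S, (1:ℝ) := setIntegral_indicator hSm
    _ = (volume (Set.Icc (0:ℝ) T ∩ S)).toReal := by
        rw [setIntegral_const, measureReal_def, smul_eq_mul, mul_one]
    _ ≤ (volume S).toReal := by
        apply ENNReal.toReal_mono
        · exact ne_of_lt (lt_of_le_of_lt (measure_mono (sparseSupp_subset T u)) hfin)
        · exact measure_mono Set.inter_subset_right
    _ = L0norm T u := rfl

theorem ae_ne_pt (c : ℝ) : ∀ᵐ t : ℝ ∂volume, t ≠ c := by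
  rw [MeasureTheory.ae_iff]
  have : {t : ℝ | ¬ t ≠ c} = {c} := by ext t; simp
  rw [this]
  exact measure_singleton c

theorem integral_Icc_split {E : Type*} [NormedAddCommGroup E] [NormedSpace ℝ E]
    (f : ℝ → E) {p q r : ℝ} (hpq : p ≤ q) (hqr : q ≤ r)
    (h1 : IntegrableOn f (Set.Icc p q)) (h2 : IntegrableOn f (Set.Icc q r)) :
    ∫ s in Set.Icc p r, f s = (∫ s in Set.Icc p q, f s) + ∫ s in Set.Icc q r, f s := by
  rw [← Set.Icc_union_Icc_eq_Icc hpq hqr]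
  apply integral_union_ae _ measurableSet_Icc.nullMeasurableSet h1 h2
  refine measure_mono_null ?_ (measure_singleton q)
  rintro t ⟨⟨_, ht1⟩, ht2, _⟩
  exact le_antisymm ht1 ht2

theorem ind_smul (S : Set ℝ) (w : ℝ → ℝ) (G : ℝ → Fin n → ℝ) (t : ℝ) :
    Set.indicator S w t • G t = Set.indicator S (fun t => w t • G t) t := by
  by_cases h : t ∈ S
  · rw [Set.indicator_of_mem h, Set.indicator_of_mem h]
  · rw [Set.indicator_of_notMem h, Set.indicator_of_notMem h, zero_smul]

theorem mul_ind_smul (S : Set ℝ) (c : ℝ) (w : ℝ → ℝ) (G : ℝ → Fin n → ℝ) (t : ℝ) :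
    (c * Set.indicator S w t) • G t = Set.indicator S (fun t => (c * w t) • G t) t := by
  by_cases h : t ∈ S
  · rw [Set.indicator_of_mem h, Set.indicator_of_mem h]
  · rw [Set.indicator_of_notMem h, Set.indicator_of_notMem h, mul_zero, zero_smul]

/-- The key construction: a sparse control with the same endpoint and support measure at most
`‖u‖₁ + ε`. -/
theorem key (T : ℝ) (hT : 0 < T)
    (hctrb : Submodule.span ℝ (Set.range fun i : Fin n => (A ^ (i : ℕ)).mulVec b) = ⊤)
    {u : ℝ → ℝ} (hu : IsControl T u) (ε : ℝ) (hε : 0 < ε) :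
    ∃ v : ℝ → ℝ, IsControl T v ∧ steer n A b T v = steer n A b T u ∧
      L0norm T v ≤ L1norm T u + ε := by
  classical
  set α := L1norm T u with hαdef
  have hα0 : 0 ≤ α := L1norm_nonneg T u
  by_cases hαT : T ≤ α
  · exact ⟨u, hu, rfl, by linarith [L0norm_le T hT.le u]⟩
  push_neg at hαT
  set θ := (T - α) / (2*T) with hθdef
  have hθpos : 0 < θ := div_pos (by linarith) (by linarith)
  have hθlt1 : θ < 1 := by
    rw [hθdef, div_lt_one (by linarith : (0:ℝ) < 2*T)]
    linarith
  set E : Set ℝ := Set.Icc (0:ℝ) T ∩ {t | |u t| ≤ 1 - θ} with hEdef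
  have hEm : MeasurableSet E :=
    measurableSet_Icc.inter (measurableSet_le hu.1.abs measurable_const)
  have hEsub : E ⊆ Set.Icc (0:ℝ) T := Set.inter_subset_left
  have hIccfin : volume (Set.Icc (0:ℝ) T) < ⊤ := by
    rw [Real.volume_Icc]; exact ENNReal.ofReal_lt_top
  have hEpos : 0 < volume E := by
    by_contra hE0
    push_neg at hE0
    have hE0' : volume E = 0 := le_antisymm hE0 zero_le
    have hae1 : ∀ᵐ t : ℝ ∂volume, t ∉ E := measure_eq_zero_iff_ae_notMem.1 hE0'
    have hae2 : ∀ᵐ t ∂(volume.restrict (Set.Icc (0:ℝ) T)), 1 - θ ≤ |u t| := by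
      filter_upwards [ae_restrict_of_ae hae1, ae_restrict_mem measurableSet_Icc] with t h1 h2
      by_contra hcc
      push_neg at hcc
      exact h1 ⟨h2, hcc.le⟩
    have hu_int : IntegrableOn (fun t => |u t|) (Set.Icc (0:ℝ) T) :=
      (integrableOn_bdd measurableSet_Icc Set.Subset.rfl hu.1 hu.2).abs
    have hconst : IntegrableOn (fun _ : ℝ => 1 - θ) (Set.Icc (0:ℝ) T) := by
      exact integrableOn_const hIccfin.ne
    have h3 := integral_mono_ae hconst hu_int hae2
    rw [setIntegral_const, measureReal_def, Real.volume_Icc, sub_zero, ENNReal.toReal_ofReal hT.le,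
      smul_eq_mul] at h3
    have h4 : T * (1 - θ) ≤ α := h3
    have h5 : T * (1 - θ) = (T + α)/2 := by rw [hθdef]; field_simp; ring
    linarith
  obtain ⟨a, b', ha0, hab, hbT, hlen, hE₀pos⟩ :=
    exists_small_interval T hT E hEsub hEpos (ε/2) (by linarith)
  set E₀ : Set ℝ := E ∩ Set.Ioo a b' with hE₀def
  have hE₀m : MeasurableSet E₀ := hEm.inter measurableSet_Ioo
  have hE₀sub : E₀ ⊆ Set.Icc (0:ℝ) T := fun t ht => hEsub ht.1
  have hE₀Ioo : E₀ ⊆ Set.Ioo a b' := Set.inter_subset_right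
  obtain ⟨r, hr, hcap⟩ := capacity A b T hctrb E₀ hE₀m hE₀sub hE₀pos
  set η := θ * r / (4*T+1) with hηdef
  have hηpos : 0 < η := by positivity
  have hη4T : 4*η*T ≤ θ*r := by
    have h0 : η * (4*T+1) = θ*r := by rw [hηdef]; field_simp
    nlinarith [hηpos.le]
  -- uniform continuity modulus
  have huc := (isCompact_Icc (a := (0:ℝ)) (b := T)).uniformContinuousOn_of_continuous
    ((g_continuous A b).continuousOn)
  rw [Metric.uniformContinuousOn_iff] at huc
  obtain ⟨δ₂, hδ₂pos, hδ₂⟩ := huc η hηpos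
  have hmod : ∀ h' : ℝ, h' ≤ δ₂/2 → ∀ s ∈ Set.Icc (0:ℝ) T, ∀ t ∈ Set.Icc (0:ℝ) T,
      |s - t| ≤ h' → ‖g A b s - g A b t‖ ≤ η := by
    intro h' hh' s hs t ht hst
    have h1 : dist s t < δ₂ := by rw [Real.dist_eq]; linarith
    have := hδ₂ s hs t ht h1
    rw [dist_eq_norm] at this
    exact this.le
  -- left approximation on [0, a]
  set N₁ : ℕ := max 1 ⌈2*a/δ₂⌉₊ with hN₁def
  have hN₁pos : (0:ℝ) < N₁ := by
    have : 1 ≤ N₁ := le_max_left _ _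
    exact_mod_cast lt_of_lt_of_le one_pos this
  set h₁ := a / N₁ with hh₁def
  have hh₁0 : 0 ≤ h₁ := div_nonneg ha0 hN₁pos.le
  have hh₁δ : h₁ ≤ δ₂/2 := by
    have h1 : 2*a/δ₂ ≤ (N₁:ℝ) := by
      calc 2*a/δ₂ ≤ (⌈2*a/δ₂⌉₊ : ℝ) := Nat.le_ceil _
        _ ≤ (N₁:ℝ) := by exact_mod_cast le_max_right 1 ⌈2*a/δ₂⌉₊
    rw [hh₁def, div_le_iff₀ hN₁pos]
    rw [div_le_iff₀ hδ₂pos] at h1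
    nlinarith
  have hN₁h : (0:ℝ) + (N₁:ℝ) * h₁ = a := by
    rw [zero_add, hh₁def]
    field_simp
  obtain ⟨vL, FL, hvLmeas, hvL1, hFLc, hFLsub, hvLsupp, hFLvol, hvLerr⟩ :=
    riemann A b T hu.1 hu.2 hηpos.le hh₁0 (hmod h₁ hh₁δ) N₁ 0 le_rfl
      (by rw [hN₁h]; linarith)
  rw [hN₁h] at hFLsub hFLvol hvLerr
  have hvLerr' : ‖(∫ s in Set.Icc (0:ℝ) a, vL s • g A b s) -
      ∫ s in Set.Icc (0:ℝ) a, u s • g A b s‖ ≤ 2*η*a := by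
    have h1 : (N₁:ℝ) * (2*η*h₁) = 2*η*a := by
      have h2 : (N₁:ℝ) * h₁ = a := by rw [← hN₁h]; ring
      nlinarith [h2]
    linarith [hvLerr]
  -- right approximation on [b', T]
  set N₂ : ℕ := max 1 ⌈2*(T-b')/δ₂⌉₊ with hN₂def
  have hN₂pos : (0:ℝ) < N₂ := by
    have : 1 ≤ N₂ := le_max_left _ _
    exact_mod_cast lt_of_lt_of_le one_pos this
  set h₂ := (T - b') / N₂ with hh₂def
  have hh₂0 : 0 ≤ h₂ := div_nonneg (by linarith) hN₂pos.le
  have hh₂δ : h₂ ≤ δ₂/2 := by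
    have h1 : 2*(T-b')/δ₂ ≤ (N₂:ℝ) := by
      calc 2*(T-b')/δ₂ ≤ (⌈2*(T-b')/δ₂⌉₊ : ℝ) := Nat.le_ceil _
        _ ≤ (N₂:ℝ) := by exact_mod_cast le_max_right 1 ⌈2*(T-b')/δ₂⌉₊
    rw [hh₂def, div_le_iff₀ hN₂pos]
    rw [div_le_iff₀ hδ₂pos] at h1
    nlinarith
  have hN₂h : b' + (N₂:ℝ) * h₂ = T := by
    rw [hh₂def]
    field_simp
    ring
  have hb'0 : 0 ≤ b' := le_trans ha0 hab.le
  obtain ⟨vR, FR, hvRmeas, hvR1, hFRc, hFRsub, hvRsupp, hFRvol, hvRerr⟩ :=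
    riemann A b T hu.1 hu.2 hηpos.le hh₂0 (hmod h₂ hh₂δ) N₂ b' hb'0 hN₂h.le
  rw [hN₂h] at hFRsub hFRvol hvRerr
  have hvRerr' : ‖(∫ s in Set.Icc b' T, vR s • g A b s) -
      ∫ s in Set.Icc b' T, u s • g A b s‖ ≤ 2*η*(T-b') := by
    have h2 : (N₂:ℝ) * h₂ = T - b' := by rw [← hN₂h]; ring
    have h1 : (N₂:ℝ) * (2*η*h₂) = 2*η*(T-b') := by nlinarith [h2]
    linarith [hvRerr]
  -- correction target
  set d : Fin n → ℝ :=
    ((∫ s in Set.Icc (0:ℝ) a, u s • g A b s) - ∫ s in Set.Icc (0:ℝ) a, vL s • g A b s) +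
    ((∫ s in Set.Icc b' T, u s • g A b s) - ∫ s in Set.Icc b' T, vR s • g A b s) with hddef
  have hdnorm : ‖d‖ ≤ θ * r := by
    have h1 := norm_add_le
      ((∫ s in Set.Icc (0:ℝ) a, u s • g A b s) - ∫ s in Set.Icc (0:ℝ) a, vL s • g A b s)
      ((∫ s in Set.Icc b' T, u s • g A b s) - ∫ s in Set.Icc b' T, vR s • g A b s)
    rw [norm_sub_rev] at h1
    rw [norm_sub_rev ((∫ s in Set.Icc b' T, u s • g A b s)) _] at h1
    have h2 : a ≤ T := by linarith
    have h3 : T - b' ≤ T := by linarith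
    calc ‖d‖ ≤ _ := h1
      _ ≤ 2*η*a + 2*η*(T-b') := add_le_add hvLerr' hvRerr'
      _ ≤ 2*η*T + 2*η*T := by nlinarith [hηpos.le]
      _ = 4*η*T := by ring
      _ ≤ θ*r := hη4T
  have hθne : θ ≠ 0 := ne_of_gt hθpos
  obtain ⟨z, hzmeas, hz1, hzint⟩ := hcap (θ⁻¹ • d) (by
    rw [norm_smul, Real.norm_eq_abs, abs_of_pos (inv_pos.2 hθpos)]
    calc θ⁻¹ * ‖d‖ ≤ θ⁻¹ * (θ * r) := by
          apply mul_le_mul_of_nonneg_left hdnorm (inv_pos.2 hθpos).le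
      _ = r := by field_simp)
  -- the sparse control
  set v : ℝ → ℝ := fun t => vL t + vR t + Set.indicator (Set.Ioo a b') u t +
    θ * Set.indicator E₀ z t with hvdef
  have hvL0 : ∀ t, a < t → vL t = 0 := fun t ht =>
    hvLsupp t (fun hmem => absurd (hFLsub hmem).2 (not_le.2 ht))
  have hvR0 : ∀ t, t < b' → vR t = 0 := fun t ht =>
    hvRsupp t (fun hmem => absurd (hFRsub hmem).1 (not_le.2 ht))
  have hvmeas : Measurable v := by
    apply Measurable.add
    apply Measurable.add
    apply Measurable.add
    · exact hvLmeas
    · exact hvRmeas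
    · exact hu.1.indicator measurableSet_Ioo
    · exact (hzmeas.indicator hE₀m).const_mul θ
  have hvcontrol : IsControl T v := by
    refine ⟨hvmeas, ?_⟩
    filter_upwards [hu.2] with t htu
    show |vL t + vR t + Set.indicator (Set.Ioo a b') u t + θ * Set.indicator E₀ z t| ≤ 1
    by_cases htab : t ∈ Set.Ioo a b'
    · rw [hvL0 t htab.1, hvR0 t htab.2, Set.indicator_of_mem htab, zero_add, zero_add]
      by_cases htE : t ∈ E₀
      · rw [Set.indicator_of_mem htE]
        have h1 : |u t| ≤ 1 - θ := htE.1.2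
        calc |u t + θ * z t| ≤ |u t| + |θ * z t| := abs_add_le _ _
          _ ≤ (1 - θ) + θ * 1 := by
              apply add_le_add h1
              rw [abs_mul, abs_of_pos hθpos]
              exact mul_le_mul_of_nonneg_left (hz1 t) hθpos.le
          _ = 1 := by ring
      · rw [Set.indicator_of_notMem htE, mul_zero, add_zero]
        exact htu
    · rw [Set.indicator_of_notMem htab,
        Set.indicator_of_notMem (fun h => htab (hE₀Ioo h)), mul_zero, add_zero, add_zero]
      by_cases htL : t ∈ FL
      · rw [hvR0 t (lt_of_le_of_lt (hFLsub htL).2 hab), add_zero]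
        exact hvL1 t
      · rw [hvLsupp t htL, zero_add]
        exact hvR1 t
  -- subset inclusions
  have haT : a ≤ T := by linarith
  have hI0a : Set.Icc (0:ℝ) a ⊆ Set.Icc (0:ℝ) T := Set.Icc_subset_Icc le_rfl haT
  have hIab : Set.Icc a b' ⊆ Set.Icc (0:ℝ) T := Set.Icc_subset_Icc ha0 hbT
  have hIbT : Set.Icc b' T ⊆ Set.Icc (0:ℝ) T := Set.Icc_subset_Icc hb'0 le_rfl
  have hvint : ∀ S : Set ℝ, MeasurableSet S → S ⊆ Set.Icc (0:ℝ) T →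
      IntegrableOn (fun s => v s • g A b s) S := fun S hSm hSsub =>
    integrableOn_smul_g A b hSm hSsub hvcontrol.1
      (ae_restrict_of_ae_restrict_of_subset hSsub hvcontrol.2)
  have huint : ∀ S : Set ℝ, MeasurableSet S → S ⊆ Set.Icc (0:ℝ) T →
      IntegrableOn (fun s => u s • g A b s) S := fun S hSm hSsub =>
    integrableOn_smul_g A b hSm hSsub hu.1
      (ae_restrict_of_ae_restrict_of_subset hSsub hu.2)
  -- split of the steering integrals
  have hsplitv : (∫ s in Set.Icc (0:ℝ) T, v s • g A b s) =
      (∫ s in Set.Icc (0:ℝ) a, v s • g A b s) + ((∫ s in Set.Icc a b', v s • g A b s) +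
        ∫ s in Set.Icc b' T, v s • g A b s) := by
    rw [integral_Icc_split _ ha0 haT (hvint _ measurableSet_Icc hI0a)
      (hvint _ measurableSet_Icc (Set.Icc_subset_Icc ha0 le_rfl))]
    congr 1
    exact integral_Icc_split _ hab.le hbT (hvint _ measurableSet_Icc hIab)
      (hvint _ measurableSet_Icc hIbT)
  have hsplitu : (∫ s in Set.Icc (0:ℝ) T, u s • g A b s) =
      (∫ s in Set.Icc (0:ℝ) a, u s • g A b s) + ((∫ s in Set.Icc a b', u s • g A b s) +
        ∫ s in Set.Icc b' T, u s • g A b s) := by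
    rw [integral_Icc_split _ ha0 haT (huint _ measurableSet_Icc hI0a)
      (huint _ measurableSet_Icc (Set.Icc_subset_Icc ha0 le_rfl))]
    congr 1
    exact integral_Icc_split _ hab.le hbT (huint _ measurableSet_Icc hIab)
      (huint _ measurableSet_Icc hIbT)
  -- pieces
  have hP1 : (∫ s in Set.Icc (0:ℝ) a, v s • g A b s) =
      ∫ s in Set.Icc (0:ℝ) a, vL s • g A b s := by
    apply setIntegral_congr_fun measurableSet_Icc
    intro t ht
    show v t • g A b t = vL t • g A b t
    have h1 : t ∉ Set.Ioo a b' := fun hmem => absurd ht.2 (not_le.2 hmem.1)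
    rw [hvdef]
    simp only []
    rw [hvR0 t (lt_of_le_of_lt ht.2 hab), Set.indicator_of_notMem h1,
      Set.indicator_of_notMem (fun h => h1 (hE₀Ioo h)), mul_zero, add_zero, add_zero, add_zero]
  have hP3 : (∫ s in Set.Icc b' T, v s • g A b s) =
      ∫ s in Set.Icc b' T, vR s • g A b s := by
    apply setIntegral_congr_fun measurableSet_Icc
    intro t ht
    show v t • g A b t = vR t • g A b t
    have h1 : t ∉ Set.Ioo a b' := fun hmem => absurd ht.1 (not_le.2 hmem.2)
    rw [hvdef]
    simp only []
    rw [hvL0 t (lt_of_lt_of_le hab ht.1), Set.indicator_of_notMem h1,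
      Set.indicator_of_notMem (fun h => h1 (hE₀Ioo h)), mul_zero, add_zero, add_zero, zero_add]
  have hint_ind_u : IntegrableOn (fun t => Set.indicator (Set.Ioo a b') u t • g A b t)
      (Set.Icc a b') := by
    apply integrableOn_smul_g A b measurableSet_Icc hIab
      (hu.1.indicator measurableSet_Ioo) (Cb := 1)
    filter_upwards [ae_restrict_of_ae_restrict_of_subset hIab hu.2] with t ht
    by_cases h : t ∈ Set.Ioo a b'
    · rw [Set.indicator_of_mem h]; exact ht
    · rw [Set.indicator_of_notMem h, abs_zero]; norm_num
  have hint_ind_z : IntegrableOn (fun t => (θ * Set.indicator E₀ z t) • g A b t)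
      (Set.Icc a b') := by
    apply integrableOn_smul_g A b measurableSet_Icc hIab
      ((hzmeas.indicator hE₀m).const_mul θ) (Cb := θ)
    apply Filter.Eventually.of_forall
    intro t
    rw [abs_mul, abs_of_pos hθpos]
    by_cases h : t ∈ E₀
    · rw [Set.indicator_of_mem h]
      calc θ * |z t| ≤ θ * 1 := mul_le_mul_of_nonneg_left (hz1 t) hθpos.le
        _ = θ := mul_one θ
    · rw [Set.indicator_of_notMem h, abs_zero, mul_zero]
      exact hθpos.le
  have hP2 : (∫ s in Set.Icc a b', v s • g A b s) =
      (∫ s in Set.Ioo a b', u s • g A b s) + d := by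
    have hcongr : (∫ s in Set.Icc a b', v s • g A b s) =
        ∫ s in Set.Icc a b', (Set.indicator (Set.Ioo a b') u s • g A b s +
          (θ * Set.indicator E₀ z s) • g A b s) := by
      apply setIntegral_congr_ae measurableSet_Icc
      filter_upwards [ae_ne_pt a, ae_ne_pt b'] with t hta htb ht
      have hvLt : vL t = 0 := by
        apply hvLsupp
        intro hmem
        exact hta (le_antisymm (hFLsub hmem).2 ht.1)
      have hvRt : vR t = 0 := by
        apply hvRsupp
        intro hmem
        exact htb (le_antisymm ht.2 (hFRsub hmem).1)
      show v t • g A b t = _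
      rw [hvdef]
      simp only []
      rw [hvLt, hvRt, zero_add, zero_add, add_smul]
    rw [hcongr, integral_add hint_ind_u hint_ind_z]
    congr 1
    · -- indicator piece for u
      have h1 : (fun s => Set.indicator (Set.Ioo a b') u s • g A b s) =
          fun s => Set.indicator (Set.Ioo a b') (fun t => u t • g A b t) s := by
        funext s; exact ind_smul _ _ _ _
      rw [h1, setIntegral_indicator measurableSet_Ioo,
        Set.inter_eq_self_of_subset_right Set.Ioo_subset_Icc_self]
    · -- indicator piece for z
      have h1 : (fun s => (θ * Set.indicator E₀ z s) • g A b s) =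
          fun s => Set.indicator E₀ (fun t => (θ * z t) • g A b t) s := by
        funext s; exact mul_ind_smul _ _ _ _ _
      have hE₀Icc : E₀ ⊆ Set.Icc a b' := fun t ht => Set.Ioo_subset_Icc_self (hE₀Ioo ht)
      rw [h1, setIntegral_indicator hE₀m, Set.inter_eq_self_of_subset_right hE₀Icc]
      have h2 : (fun t => (θ * z t) • g A b t) = fun t => θ • (z t • g A b t) := by
        funext t; rw [mul_smul]
      rw [h2, integral_smul, hzint, smul_smul, mul_inv_cancel₀ hθne, one_smul]
  -- exact steering
  have hsteer : steer n A b T v = steer n A b T u := by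
    rw [steer_eq, steer_eq, hsplitv, hsplitu, hP1, hP2, hP3]
    have hIoo : (∫ s in Set.Icc a b', u s • g A b s) = ∫ s in Set.Ioo a b', u s • g A b s :=
      (setIntegral_congr_set MeasureTheory.Ioo_ae_eq_Icc).symm
    rw [hIoo, hddef]
    abel
  -- support bound
  refine ⟨v, hvcontrol, hsteer, ?_⟩
  set F : Set ℝ := (FL ∪ Set.Icc a b') ∪ FR with hFdef
  have hFclosed : IsClosed F := (hFLc.union isClosed_Icc).union hFRc
  have hsuppsub : sparseSupp T v ⊆ F := by
    apply closure_minimal _ hFclosed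
    rintro t ⟨htIcc, htne⟩
    by_contra htF
    rw [hFdef] at htF
    simp only [Set.mem_union, not_or] at htF
    obtain ⟨⟨htFL, htab⟩, htFR⟩ := htF
    apply htne
    show vL t + vR t + _ + _ = 0
    have h1 : t ∉ Set.Ioo a b' := fun h => htab (Set.Ioo_subset_Icc_self h)
    rw [hvLsupp t htFL, hvRsupp t htFR, Set.indicator_of_notMem h1,
      Set.indicator_of_notMem (fun h => h1 (hE₀Ioo h)), mul_zero]
    ring
  have hintabs : ∀ S : Set ℝ, MeasurableSet S → S ⊆ Set.Icc (0:ℝ) T →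
      IntegrableOn (fun t => |u t|) S := fun S hSm hSsub =>
    (integrableOn_bdd hSm hSsub hu.1 (ae_restrict_of_ae_restrict_of_subset hSsub hu.2)).abs
  have hsum_int : (∫ t in Set.Icc (0:ℝ) a, |u t|) + ∫ t in Set.Icc b' T, |u t| ≤ α := by
    have hsplit : α = (∫ t in Set.Icc (0:ℝ) a, |u t|) + ((∫ t in Set.Icc a b', |u t|) +
        ∫ t in Set.Icc b' T, |u t|) := by
      rw [hαdef]
      show (∫ t in Set.Icc (0:ℝ) T, |u t|) = _
      rw [integral_Icc_split _ ha0 haT (hintabs _ measurableSet_Icc hI0a)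
        (hintabs _ measurableSet_Icc (Set.Icc_subset_Icc ha0 le_rfl))]
      congr 1
      exact integral_Icc_split _ hab.le hbT (hintabs _ measurableSet_Icc hIab)
        (hintabs _ measurableSet_Icc hIbT)
    have hmid : 0 ≤ ∫ t in Set.Icc a b', |u t| := integral_nonneg fun t => abs_nonneg _
    linarith [hsplit.ge]
  have hvolF : volume F ≤ ENNReal.ofReal (α + ε) := by
    calc volume F ≤ volume (FL ∪ Set.Icc a b') + volume FR := measure_union_le _ _
      _ ≤ (volume FL + volume (Set.Icc a b')) + volume FR :=
          add_le_add_left (measure_union_le _ _) _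
      _ ≤ (ENNReal.ofReal (∫ t in Set.Icc (0:ℝ) a, |u t|) + ENNReal.ofReal (b' - a)) +
          ENNReal.ofReal (∫ t in Set.Icc b' T, |u t|) := by
          apply add_le_add (add_le_add hFLvol _) hFRvol
          rw [Real.volume_Icc]
      _ = ENNReal.ofReal ((∫ t in Set.Icc (0:ℝ) a, |u t|) + (b' - a) +
          ∫ t in Set.Icc b' T, |u t|) := by
          rw [← ENNReal.ofReal_add (integral_nonneg fun t => abs_nonneg _)
              (by linarith : (0:ℝ) ≤ b' - a),
            ← ENNReal.ofReal_add
              (add_nonneg (integral_nonneg fun t => abs_nonneg _) (by linarith : (0:ℝ) ≤ b' - a))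
              (integral_nonneg fun t => abs_nonneg _)]
      _ ≤ ENNReal.ofReal (α + ε) := by
          apply ENNReal.ofReal_le_ofReal
          linarith
  show L0norm T v ≤ α + ε
  have : volume (sparseSupp T v) ≤ ENNReal.ofReal (α + ε) :=
    le_trans (measure_mono hsuppsub) hvolF
  exact ENNReal.toReal_le_of_le_ofReal (by linarith) this

end SparseAux

/-- under controllability and invertibility of `A`,
`V₀(ξ) = V₁(ξ)` for every `ξ ∈ R(T)`. -/
theorem V0_eq_V1 (T : ℝ) (hT : 0 < T) (n : ℕ) (hn : 1 ≤ n)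
    (A : Matrix (Fin n) (Fin n) ℝ) (b : Fin n → ℝ)
    (hctrb : Controllable n A b) (hA : IsUnit A) :
    ∀ ξ ∈ ReachSet n A b T, V0 n A b T ξ = V1 n A b T ξ := by
  intro ξ hξ
  obtain ⟨u₀, hu₀, hξ0⟩ := hξ
  have hAdm0 : (fun t => -u₀ t) ∈ Adm n A b T ξ := by
    constructor
    · refine ⟨hu₀.1.neg, ?_⟩
      filter_upwards [hu₀.2] with t ht
      rwa [abs_neg]
    · have : steer n A b T (fun t => -u₀ t) = -(steer n A b T u₀) := by
        rw [SparseAux.steer_eq, SparseAux.steer_eq, ← integral_neg]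
        congr 1
        funext s
        rw [neg_smul]
      rw [this, neg_neg]
      exact hξ0
  have hne1 : (L1norm T '' Adm n A b T ξ).Nonempty := ⟨_, ⟨_, hAdm0, rfl⟩⟩
  have hne0 : (L0norm T '' Adm n A b T ξ).Nonempty := ⟨_, ⟨_, hAdm0, rfl⟩⟩
  have hbdd1 : BddBelow (L1norm T '' Adm n A b T ξ) := by
    refine ⟨0, ?_⟩
    rintro y ⟨u, _, rfl⟩
    exact SparseAux.L1norm_nonneg T u
  have hbdd0 : BddBelow (L0norm T '' Adm n A b T ξ) := by
    refine ⟨0, ?_⟩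
    rintro y ⟨u, _, rfl⟩
    exact SparseAux.L0norm_nonneg T u
  apply le_antisymm
  · -- V0 ≤ V1
    apply le_csInf hne1
    rintro y ⟨u, huAdm, rfl⟩
    apply le_of_forall_pos_le_add
    intro ε hε
    obtain ⟨v, hvc, hvsteer, hvbound⟩ := SparseAux.key A b T hT hctrb huAdm.1 ε hε
    have hvAdm : v ∈ Adm n A b T ξ := ⟨hvc, by rw [huAdm.2, hvsteer]⟩
    exact le_trans (csInf_le hbdd0 ⟨v, hvAdm, rfl⟩) hvbound
  · -- V1 ≤ V0
    apply le_csInf hne0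
    rintro y ⟨u, huAdm, rfl⟩
    exact le_trans (csInf_le hbdd1 ⟨u, huAdm, rfl⟩) (SparseAux.L1_le_L0 T hT.le huAdm.1)


end
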